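/- Let V be a skew-Hermitian n×n complex matrix whose spectrum consists of 0 (with multiplicity n−2) and ±iω_p for some ω_p > 0. Then exp(tV) = I + (sin(ω_p t)/ω_p) V + 2 (sin(ω_p t / 2)/ω_p)² V² for all t ∈ ℝ. -/

import Mathlib

open Matrix Polynomial

lemma stmt4_eval_charpoly {N : ℕ} (M : Matrix (Fin N) (Fin N) ℂ) (μ : ℂ) :
    M.charpoly.eval μ = det (μ • (1 : Matrix (Fin N) (Fin N) ℂ) - M) := by
  rw [Matrix.charpoly, eval_det, matPolyEquiv_charmatrix, eval_sub, eval_X, eval_C]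
  congr 1
  ext i j
  by_cases h : i = j <;> simp [Matrix.scalar, Matrix.one_apply, Matrix.diagonal, h]

lemma stmt4_eig_cases {N : ℕ} (ωp : ℝ) (V : Matrix (Fin N) (Fin N) ℂ)
    (hchar : V.charpoly = X ^ (N - 2) * (X ^ 2 + C ((ωp : ℂ) ^ 2)))
    (e : ℝ) (h1 : ((e : ℝ) : ℂ) ∈ spectrum ℂ (Complex.I • V)) :
    e = 0 ∨ e = ωp ∨ e = -ωp := by
  rw [spectrum.mem_iff, Algebra.algebraMap_eq_smul_one] at h1
  have h2 : det ((-Complex.I * e) • (1 : Matrix (Fin N) (Fin N) ℂ) - V) = 0 := by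
    by_contra hdet
    apply h1
    have h3 : (e : ℂ) • (1 : Matrix (Fin N) (Fin N) ℂ) - Complex.I • V
        = Complex.I • ((-Complex.I * e) • (1 : Matrix (Fin N) (Fin N) ℂ) - V) := by
      rw [smul_sub, smul_smul]
      congr 2
      linear_combination (e : ℂ) * Complex.I_mul_I
    rw [h3]
    apply (Matrix.isUnit_iff_isUnit_det _).mpr
    rw [Matrix.det_smul]
    exact (mul_ne_zero (pow_ne_zero _ Complex.I_ne_zero) hdet).isUnit
  have h4 : V.charpoly.eval (-Complex.I * e) = 0 := by rw [stmt4_eval_charpoly]; exact h2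
  rw [hchar] at h4
  simp only [eval_mul, eval_pow, eval_add, eval_C, eval_X] at h4
  rcases mul_eq_zero.mp h4 with h5 | h5
  · left
    have h6 : (-Complex.I * e) = 0 := (pow_eq_zero_iff'.mp h5).1
    rcases mul_eq_zero.mp h6 with h7 | h7
    · exact absurd (neg_eq_zero.mp h7) Complex.I_ne_zero
    · exact_mod_cast h7
  · have h6 : ((e : ℂ)) ^ 2 = ((ωp : ℝ) : ℂ) ^ 2 := by
      linear_combination -h5 + (e : ℂ) ^ 2 * Complex.I_mul_I
    have h7 : e ^ 2 = ωp ^ 2 := by exact_mod_cast h6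
    rcases sq_eq_sq_iff_eq_or_eq_neg.mp h7 with h8 | h8
    · right; left; exact h8
    · right; right; exact h8

lemma stmt4_scalar (ωp t : ℝ) (hωp : ωp ≠ 0) (e : ℝ)
    (he : e = 0 ∨ e = ωp ∨ e = -ωp) :
    Complex.exp ((t : ℂ) * (-Complex.I * (e : ℂ))) =
      1 + ((Real.sin (ωp * t) / ωp : ℝ) : ℂ) * (-Complex.I * (e : ℂ)) +
        ((2 * (Real.sin (ωp * t / 2) / ωp) ^ 2 : ℝ) : ℂ) * (-Complex.I * (e : ℂ)) ^ 2 := by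
  have hcos : Real.cos (ωp * t) = 1 - 2 * Real.sin (ωp * t / 2) ^ 2 := by
    have h1 : Real.cos (2 * (ωp * t / 2)) = 2 * Real.cos (ωp * t / 2) ^ 2 - 1 :=
      Real.cos_two_mul _
    have h2 : Real.sin (ωp * t / 2) ^ 2 + Real.cos (ωp * t / 2) ^ 2 = 1 :=
      Real.sin_sq_add_cos_sq _
    have h3 : (2 : ℝ) * (ωp * t / 2) = ωp * t := by ring
    rw [h3] at h1; linarith
  have hω : (ωp : ℂ) ≠ 0 := Complex.ofReal_ne_zero.mpr hωp
  rcases he with he | he | he <;> subst he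
  · simp
  · have h1 : (t : ℂ) * (-Complex.I * ((e : ℝ) : ℂ)) = ((-(e * t) : ℝ) : ℂ) * Complex.I := by
      push_cast; ring
    rw [h1, Complex.exp_mul_I, ← Complex.ofReal_cos, ← Complex.ofReal_sin,
      Real.cos_neg, Real.sin_neg, hcos]
    push_cast
    field_simp
    ring_nf
    simp [Complex.I_sq]
    ring
  · have h1 : (t : ℂ) * (-Complex.I * ((-ωp : ℝ) : ℂ)) = (((ωp * t) : ℝ) : ℂ) * Complex.I := by
      push_cast; ring
    rw [h1, Complex.exp_mul_I, ← Complex.ofReal_cos, ← Complex.ofReal_sin, hcos]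
    push_cast
    field_simp
    ring_nf
    simp [Complex.I_sq]
    ring

/-- If V is skew-Hermitian with characteristic polynomial λ^{n−2}(λ² + ω_p²)
(spectrum {0, ±iω_p}), then exp(tV) = I + (sin(ω_p t)/ω_p)V + 2(sin(ω_p t/2)/ω_p)² V². -/
theorem stmt4 {n : ℕ} (hn : 2 ≤ n) (ωp : ℝ) (hωp : 0 < ωp)
    (V : Matrix (Fin n) (Fin n) ℂ) (hskew : Vᴴ = -V)
    (hchar : V.charpoly = X ^ (n - 2) * (X ^ 2 + C ((ωp : ℂ) ^ 2))) :
    ∀ t : ℝ,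
      NormedSpace.exp (t • V) =
        1 + (Real.sin (ωp * t) / ωp) • V +
          (2 * (Real.sin (ωp * t / 2) / ωp) ^ 2) • (V ^ 2) := by
  have hW : (Complex.I • V).IsHermitian := by
    unfold Matrix.IsHermitian
    rw [Matrix.conjTranspose_smul, hskew]
    simp [Complex.conj_I]
  set e : Fin n → ℝ := hW.eigenvalues with he
  set u : (Matrix (Fin n) (Fin n) ℂ)ˣ := Unitary.toUnits hW.eigenvectorUnitary with hu
  have hcoe : (↑u : Matrix (Fin n) (Fin n) ℂ) = ↑hW.eigenvectorUnitary := rfl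
  have hcoeinv : (↑u⁻¹ : Matrix (Fin n) (Fin n) ℂ)
      = star (↑hW.eigenvectorUnitary : Matrix (Fin n) (Fin n) ℂ) := rfl
  have hV : V = (↑u : Matrix (Fin n) (Fin n) ℂ)
      * diagonal (fun j => -Complex.I * (e j : ℂ)) * (↑u⁻¹ : Matrix (Fin n) (Fin n) ℂ) := by
    have h0 : V = (-Complex.I) • (Complex.I • V) := by
      rw [smul_smul]
      norm_num [Complex.I_mul_I]
    have hdiag : (-Complex.I) • diagonal (RCLike.ofReal ∘ hW.eigenvalues)
        = diagonal (fun j => -Complex.I * (e j : ℂ)) := by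
      ext i j
      by_cases h : i = j <;> simp [Matrix.diagonal, h, he]
    conv_lhs => rw [h0, hW.spectral_theorem, Unitary.conjStarAlgAut_apply]
    rw [← Matrix.smul_mul, ← Matrix.mul_smul, hdiag, hcoe, hcoeinv]
  have hcases : ∀ j, e j = 0 ∨ e j = ωp ∨ e j = -ωp := by
    intro j
    apply stmt4_eig_cases ωp V hchar (e j)
    have h1 := hW.eigenvalues_mem_spectrum_real j
    simpa using spectrum.algebraMap_mem ℂ h1
  have hdsmul : ∀ (c : ℝ) (v : Fin n → ℂ),
      c • diagonal v = diagonal (fun j => ((c : ℝ) : ℂ) * v j) := by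
    intro c v; ext i j
    by_cases h : i = j <;> simp [Matrix.diagonal, h, Complex.real_smul]
  intro t
  have hLHS : NormedSpace.exp (t • V) = (↑u : Matrix (Fin n) (Fin n) ℂ)
      * diagonal (fun j => Complex.exp ((t : ℂ) * (-Complex.I * (e j : ℂ))))
      * (↑u⁻¹ : Matrix (Fin n) (Fin n) ℂ) := by
    conv_lhs => rw [hV]
    rw [← Matrix.smul_mul, ← Matrix.mul_smul, hdsmul, Matrix.exp_units_conj]
    congr 2
    rw [Matrix.exp_diagonal, Pi.exp_def]
    simp only [← Complex.exp_eq_exp_ℂ]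
  have hsq : V ^ 2 = (↑u : Matrix (Fin n) (Fin n) ℂ)
      * (diagonal (fun j => -Complex.I * (e j : ℂ))) ^ 2
      * (↑u⁻¹ : Matrix (Fin n) (Fin n) ℂ) := by
    conv_lhs => rw [hV]
    rw [Units.conj_pow]
  have hRHS : (1 : Matrix (Fin n) (Fin n) ℂ) + (Real.sin (ωp * t) / ωp) • V +
        (2 * (Real.sin (ωp * t / 2) / ωp) ^ 2) • (V ^ 2)
      = (↑u : Matrix (Fin n) (Fin n) ℂ)
        * diagonal (fun j => 1 + ((Real.sin (ωp * t) / ωp : ℝ) : ℂ) * (-Complex.I * (e j : ℂ))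
            + ((2 * (Real.sin (ωp * t / 2) / ωp) ^ 2 : ℝ) : ℂ) * (-Complex.I * (e j : ℂ)) ^ 2)
        * (↑u⁻¹ : Matrix (Fin n) (Fin n) ℂ) := by
    rw [hsq]
    conv_lhs => rw [hV]
    rw [Matrix.diagonal_pow]
    rw [← Matrix.smul_mul, ← Matrix.mul_smul, ← Matrix.smul_mul, ← Matrix.mul_smul,
      hdsmul, hdsmul]
    have h1 : (1 : Matrix (Fin n) (Fin n) ℂ) = (↑u : Matrix (Fin n) (Fin n) ℂ)
        * (1 : Matrix (Fin n) (Fin n) ℂ) * (↑u⁻¹ : Matrix (Fin n) (Fin n) ℂ) := by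
      rw [mul_one, Units.mul_inv]
    conv_lhs => rw [h1]
    rw [← add_mul, ← add_mul, ← mul_add, ← mul_add]
    congr 2
    rw [← Matrix.diagonal_one, Matrix.diagonal_add, Matrix.diagonal_add]
    simp only [Pi.pow_apply]
  rw [hLHS, hRHS]
  congr 2
  exact congrArg _ (funext fun j => stmt4_scalar ωp t (ne_of_gt hωp) (e j) (hcases j))
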